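/- Let L be a finite extension of K, let B be the integral closure of A in L, and let l be the residue field of B. Assume that [l : k] = [L : K] and that l = k(s̄) for some element s̄ ∈ l. Then for every lifting s̃ ∈ B of s̄ one has B = A[s̃], i.e. B equals the A-subalgebra of B generated by s̃. -/

import Mathlib

set_option synthInstance.maxHeartbeats 400000

set_option maxHeartbeats 4000000 in
/-- Let `A` be a Henselian valuation ring which is not a field, with fraction field `K` and
residue field `k`, let `L` be a finite extension of `K` and let `B` be the integral closure
of `A` in `L` (a Henselian local valuation ring), with residue field `l` (a `k`-algebra via
the map induced by `A → B`).  Assume `[l : k] = [L : K]` and that `l = k(sbar)` for some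
`sbar ∈ l`.  Then for every lifting `slift ∈ B` of `sbar` one has `B = A[slift]`. -/
theorem integralClosure_eq_adjoin_of_residue_gen
    {A K L : Type*} [CommRing A] [IsDomain A] [ValuationRing A] [HenselianLocalRing A]
    (hA : ¬IsField A)
    [Field K] [Algebra A K] [IsFractionRing A K]
    [Field L] [Algebra K L] [Algebra A L] [IsScalarTower A K L]
    [FiniteDimensional K L]
    [IsLocalRing ↥(integralClosure A L)]
    [Algebra (IsLocalRing.ResidueField A) (IsLocalRing.ResidueField ↥(integralClosure A L))]
    (halg : ∀ a : A,
      algebraMap (IsLocalRing.ResidueField A) (IsLocalRing.ResidueField ↥(integralClosure A L))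
          (IsLocalRing.residue A a) =
        IsLocalRing.residue ↥(integralClosure A L) (algebraMap A ↥(integralClosure A L) a))
    (hdeg : Module.finrank (IsLocalRing.ResidueField A)
        (IsLocalRing.ResidueField ↥(integralClosure A L)) = Module.finrank K L)
    (sbar : IsLocalRing.ResidueField ↥(integralClosure A L))
    (hgen : IntermediateField.adjoin (IsLocalRing.ResidueField A) {sbar} = ⊤)
    (slift : ↥(integralClosure A L)) (hlift : IsLocalRing.residue ↥(integralClosure A L) slift = sbar) :
    Algebra.adjoin A ({slift} : Set ↥(integralClosure A L)) = ⊤ := by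
  classical
  have hn0 : 0 < Module.finrank K L := Module.finrank_pos
  haveI : Module.Finite (IsLocalRing.ResidueField A)
      (IsLocalRing.ResidueField ↥(integralClosure A L)) :=
    Module.finite_of_finrank_pos (by rw [hdeg]; exact hn0)
  have hint : IsIntegral (IsLocalRing.ResidueField A) sbar :=
    IsIntegral.of_finite (IsLocalRing.ResidueField A) sbar
  have hmindeg : (minpoly (IsLocalRing.ResidueField A) sbar).natDegree = Module.finrank K L := by
    rw [← IntermediateField.adjoin.finrank hint, hgen, IntermediateField.finrank_top', hdeg]
  -- linear independence of the powers of `sbar` over `k`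
  have li0 : LinearIndependent (IsLocalRing.ResidueField A)
      fun i : Fin (Module.finrank K L) => sbar ^ (i : ℕ) := by
    have := linearIndependent_pow (K := IsLocalRing.ResidueField A) sbar
    rwa [hmindeg] at this
  -- key lemma: reduction of integral linear combinations of powers of `slift`
  have key : ∀ c : Fin (Module.finrank K L) → A,
      IsLocalRing.residue ↥(integralClosure A L)
        (∑ i : Fin (Module.finrank K L),
          algebraMap A ↥(integralClosure A L) (c i) * slift ^ (i : ℕ)) = 0 →
      ∀ i, IsLocalRing.residue A (c i) = 0 := by
    intro c hc
    have h2 : ∑ i : Fin (Module.finrank K L),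
        (IsLocalRing.residue A (c i)) • sbar ^ (i : ℕ) = 0 := by
      rw [← hc, map_sum]
      refine Finset.sum_congr rfl fun i _ => ?_
      rw [map_mul, map_pow, hlift, ← halg, Algebra.smul_def]
    exact Fintype.linearIndependent_iff.mp li0 _ h2
  -- valuation
  have hdvd : ∀ x y : K, y ≠ 0 → ValuationRing.valuation A K x ≤ ValuationRing.valuation A K y →
      ∃ d : A, algebraMap A K d * y = x := by
    intro x y hy hle
    have hvy : ValuationRing.valuation A K y ≠ 0 :=
      (Valuation.ne_zero_iff (ValuationRing.valuation A K)).mpr hy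
    have : ValuationRing.valuation A K (x / y) ≤ 1 := by
      rw [map_div₀]
      exact (div_le_one₀ (zero_lt_iff.mpr hvy)).mpr hle
    obtain ⟨d, hd⟩ := (ValuationRing.mem_integer_iff A K _).mp this
    exact ⟨d, by rw [hd]; field_simp⟩
  have hmax : ∀ a : Fin (Module.finrank K L) → K,
      ∃ j, ∀ i, ValuationRing.valuation A K (a i) ≤ ValuationRing.valuation A K (a j) := by
    intro a
    obtain ⟨j, -, hj⟩ := Finset.exists_max_image Finset.univ
      (fun i => ValuationRing.valuation A K (a i)) ⟨⟨0, hn0⟩, Finset.mem_univ _⟩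
    exact ⟨j, fun i => hj i (Finset.mem_univ _)⟩
  -- coercion of sums
  have coe_sum : ∀ d : Fin (Module.finrank K L) → A,
      ((∑ i : Fin (Module.finrank K L),
          algebraMap A ↥(integralClosure A L) (d i) * slift ^ (i : ℕ) : ↥(integralClosure A L)) : L)
        = ∑ i : Fin (Module.finrank K L), algebraMap A K (d i) • (slift : L) ^ (i : ℕ) := by
    intro d
    push_cast
    try refine Finset.sum_congr rfl fun i _ => ?_
    try rw [Algebra.smul_def, ← IsScalarTower.algebraMap_apply]
    try norm_cast
  have hone : (1 : IsLocalRing.ResidueField A) ≠ 0 := one_ne_zero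
  have hinj := IsFractionRing.injective A K
  -- linear independence of the powers of `slift` over `K`
  have li : LinearIndependent K fun i : Fin (Module.finrank K L) => (slift : L) ^ (i : ℕ) := by
    rw [Fintype.linearIndependent_iff]
    intro g hg
    by_contra hgne
    push_neg at hgne
    obtain ⟨i0, hi0⟩ := hgne
    obtain ⟨j, hj⟩ := hmax g
    have hgj : g j ≠ 0 := by
      intro h
      apply hi0
      have := hj i0
      rw [h, map_zero, le_zero_iff] at this
      exact (Valuation.zero_iff (ValuationRing.valuation A K)).mp this
    choose d hd using fun i => hdvd (g i) (g j) hgj (hj i)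
    have hsum : (∑ i : Fin (Module.finrank K L),
        algebraMap A ↥(integralClosure A L) (d i) * slift ^ (i : ℕ) : ↥(integralClosure A L)) = 0 := by
      have h3 : ((∑ i : Fin (Module.finrank K L),
          algebraMap A ↥(integralClosure A L) (d i) * slift ^ (i : ℕ) : ↥(integralClosure A L)) : L)
          = (g j)⁻¹ • ∑ i : Fin (Module.finrank K L), g i • (slift : L) ^ (i : ℕ) := by
        rw [coe_sum, Finset.smul_sum]
        refine Finset.sum_congr rfl fun i _ => ?_
        rw [smul_smul]
        congr 1
        rw [← hd i]
        field_simp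
      rw [hg, smul_zero] at h3
      exact Subtype.coe_injective (h3.trans (ZeroMemClass.coe_zero _).symm)
    have hkey := key d (by rw [hsum, map_zero])
    have hdj : d j = 1 := by
      have h4 := hd j
      field_simp at h4
      exact hinj (h4.trans (map_one _).symm)
    have h5 := hkey j
    rw [hdj, map_one] at h5
    exact hone h5
  haveI : Nonempty (Fin (Module.finrank K L)) := ⟨⟨0, hn0⟩⟩
  set b : Module.Basis (Fin (Module.finrank K L)) K L :=
    basisOfLinearIndependentOfCardEqFinrank li (by simp) with hbdef
  have hb : ∀ i, b i = (slift : L) ^ (i : ℕ) := fun i => by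
    rw [hbdef, coe_basisOfLinearIndependentOfCardEqFinrank]
  -- main argument
  rw [eq_top_iff]
  rintro x -
  have hx : ∑ i : Fin (Module.finrank K L), (b.repr (x : L) i) • (slift : L) ^ (i : ℕ) = (x : L) := by
    conv_rhs => rw [← Module.Basis.sum_repr b (x : L)]
    exact Finset.sum_congr rfl fun i _ => by rw [hb i]
  by_cases hall : ∀ i, ∃ e : A, algebraMap A K e = b.repr (x : L) i
  · choose e he using hall
    have hxe : x = ∑ i : Fin (Module.finrank K L),
        algebraMap A ↥(integralClosure A L) (e i) * slift ^ (i : ℕ) := by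
      have h6 : ((∑ i : Fin (Module.finrank K L),
          algebraMap A ↥(integralClosure A L) (e i) * slift ^ (i : ℕ) : ↥(integralClosure A L)) : L)
          = (x : L) := by
        rw [coe_sum, ← hx]
        exact Finset.sum_congr rfl fun i _ => by rw [he i]
      exact Subtype.coe_injective h6.symm
    rw [hxe]
    exact Subalgebra.sum_mem _ fun i _ => Subalgebra.mul_mem _
      (Subalgebra.algebraMap_mem _ _)
      (Subalgebra.pow_mem _ (Algebra.self_mem_adjoin_singleton A slift) _)
  · exfalso
    push_neg at hall
    obtain ⟨i0, hi0⟩ := hall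
    obtain ⟨j, hj⟩ := hmax (fun i => b.repr (x : L) i)
    have hjni : ¬ ValuationRing.valuation A K (b.repr (x : L) j) ≤ 1 := by
      intro hle
      obtain ⟨e, he⟩ := (ValuationRing.mem_integer_iff A K _).mp ((hj i0).trans hle)
      exact hi0 e he
    have haj : b.repr (x : L) j ≠ 0 := by
      intro h
      apply hjni
      rw [h, map_zero]
      exact zero_le_one
    -- `(a j)⁻¹` is a nonunit integer
    have hinv : ValuationRing.valuation A K (b.repr (x : L) j)⁻¹ ≤ 1 := by
      rw [map_inv₀]
      exact inv_le_one_of_one_le₀ (le_of_not_ge hjni)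
    obtain ⟨m, hm⟩ := (ValuationRing.mem_integer_iff A K _).mp hinv
    have hmnu : ¬ IsUnit m := by
      intro hu
      apply hjni
      obtain ⟨u, rfl⟩ := hu
      have h7 : algebraMap A K ((u⁻¹ : Aˣ) : A) = b.repr (x : L) j := by
        have h1 : algebraMap A K ((u⁻¹ : Aˣ) : A) * algebraMap A K ((u : Aˣ) : A) = 1 := by
          rw [← map_mul, ← map_one (algebraMap A K)]
          congr 1
          exact_mod_cast u.inv_mul
        rw [hm] at h1
        rw [eq_inv_of_mul_eq_one_left h1, inv_inv]
      rw [← h7]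
      exact (ValuationRing.mem_integer_iff A K _).mpr ⟨_, rfl⟩
    have hmres : IsLocalRing.residue A m = 0 :=
      Ideal.Quotient.eq_zero_iff_mem.mpr hmnu
    choose d hd using fun i => hdvd (b.repr (x : L) i) (b.repr (x : L) j) haj (hj i)
    have hsum : algebraMap A ↥(integralClosure A L) m * x
        = ∑ i : Fin (Module.finrank K L),
            algebraMap A ↥(integralClosure A L) (d i) * slift ^ (i : ℕ) := by
      have h8 : ((algebraMap A ↥(integralClosure A L) m * x : ↥(integralClosure A L)) : L)
          = ((∑ i : Fin (Module.finrank K L),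
              algebraMap A ↥(integralClosure A L) (d i) * slift ^ (i : ℕ) : ↥(integralClosure A L)) : L) := by
        rw [coe_sum]
        push_cast
        rw [← hx, Finset.mul_sum]
        refine Finset.sum_congr rfl fun i _ => ?_
        have hne : algebraMap K L ((b.repr (x : L)) j) ≠ 0 := by
          simpa using haj
        rw [Algebra.smul_def, Algebra.smul_def, ← hd i, map_mul,
          IsScalarTower.algebraMap_apply A K L, hm, map_inv₀]
        field_simp
      exact Subtype.coe_injective h8
    have hres0 : IsLocalRing.residue ↥(integralClosure A L)
        (∑ i : Fin (Module.finrank K L),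
          algebraMap A ↥(integralClosure A L) (d i) * slift ^ (i : ℕ)) = 0 := by
      rw [← hsum, map_mul, ← halg, hmres, map_zero, zero_mul]
    have hdj : d j = 1 := by
      have h9 := hd j
      field_simp at h9
      exact hinj (h9.trans (map_one _).symm)
    have h10 := key d hres0 j
    rw [hdj, map_one] at h10
    exact hone h10
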